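/- Let f be the exponential generating function of the Catalan numbers. Then t·(4 − f'(t)/f(t)) tends to 3/2 as t → +∞; equivalently, f'(t)/f(t) = 4 − 3/(2t) + O(1/t^2) as t → +∞. -/

import Mathlib

open scoped Nat
open Filter

/-- The exponential generating function of the Catalan numbers. -/
noncomputable def catalanEGF (t : ℝ) : ℝ := ∑' n : ℕ, (catalan n : ℝ) * t ^ n / n !

-- basic catalan facts
lemma catalan_le_four_pow (n : ℕ) : catalan n ≤ 4 ^ n := by
  have h1 : catalan n ≤ n.centralBinom := by
    calc catalan n ≤ (n + 1) * catalan n := Nat.le_mul_of_pos_left _ (Nat.succ_pos n)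
    _ = n.centralBinom := succ_mul_catalan_eq_centralBinom n
  refine h1.trans ?_
  have h2 : n.centralBinom ≤ 2 ^ (2 * n) := by
    rw [Nat.centralBinom]
    calc (2 * n).choose n ≤ ∑ i ∈ Finset.range (2 * n + 1), (2 * n).choose i := by
          apply Finset.single_le_sum (fun i _ => Nat.zero_le _)
          simp [Nat.lt_succ_iff]; omega
      _ = 2 ^ (2 * n) := Nat.sum_range_choose (2 * n)
  calc n.centralBinom ≤ 2 ^ (2 * n) := h2
    _ = 4 ^ n := by rw [pow_mul]; norm_num

lemma catalan_rec (n : ℕ) : (n + 2) * catalan (n + 1) = (4 * n + 2) * catalan n := by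
  have h1 : (n + 2) * catalan (n + 1) = (n + 1).centralBinom :=
    succ_mul_catalan_eq_centralBinom (n+1)
  have h2 := Nat.succ_mul_centralBinom_succ n
  have h3 := succ_mul_catalan_eq_centralBinom n
  have : (n + 1) * ((n + 2) * catalan (n + 1)) = (n + 1) * ((4 * n + 2) * catalan n) := by
    rw [h1, h2, ← h3]; ring
  exact Nat.eq_of_mul_eq_mul_left (Nat.succ_pos n) this

lemma summable_egf (t : ℝ) : Summable (fun n => (catalan n : ℝ) * t ^ n / n !) := by
  apply Summable.of_norm_bounded
    (Real.summable_pow_div_factorial (4 * |t|))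
  intro n
  rw [Real.norm_eq_abs, abs_div, abs_mul, abs_pow, mul_pow]
  rw [abs_of_nonneg (by positivity : (0:ℝ) ≤ (n ! : ℝ))]
  apply div_le_div_of_nonneg_right ?_ (by positivity)
  gcongr
  · rw [Nat.abs_cast]
    exact_mod_cast catalan_le_four_pow n


lemma summable_deriv_bound (R : ℝ) (hR : 1 ≤ R) :
    Summable (fun n : ℕ => (catalan n : ℝ) * n * R ^ (n - 1) / n !) := by
  rw [← summable_nat_add_iff 1]
  apply Summable.of_norm_bounded
    ((Real.summable_pow_div_factorial (4 * R)).mul_left 4)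
  intro n
  have h1 : ((n + 1)! : ℝ) = (n + 1) * n ! := by exact_mod_cast Nat.factorial_succ n
  rw [Real.norm_eq_abs, abs_of_nonneg (by positivity)]
  have h2 : ((catalan (n+1) : ℝ)) * (n + 1) * R ^ (n + 1 - 1) / (n + 1)! 
      = (catalan (n+1) : ℝ) * R ^ n / n ! := by
    rw [h1]; push_cast; field_simp
  push_cast
  push_cast at h2
  rw [h2, mul_pow]
  have h3 : (4:ℝ) * (4 ^ n * R ^ n / n !) = (4 ^ n * 4) * (R ^ n / n !) := by ring
  rw [h3, mul_div_assoc]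
  gcongr
  calc ((catalan (n+1) : ℝ)) ≤ 4 ^ (n + 1) := by exact_mod_cast catalan_le_four_pow (n+1)
    _ = 4 ^ n * 4 := by ring

lemma hasDerivAt_catalanEGF (t : ℝ) :
    HasDerivAt catalanEGF (∑' n : ℕ, (catalan (n+1) : ℝ) * t ^ n / n !) t := by
  set R := |t| + 1 with hRdef
  have habs : 0 ≤ |t| := abs_nonneg t
  have hR1 : 1 ≤ R := by simp only [hRdef]; linarith
  have htmem : t ∈ Set.Ioo (-R) R := by
    constructor
    · have := neg_abs_le t; simp only [hRdef]; linarith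
    · have := le_abs_self t; simp only [hRdef]; linarith
  have hu := summable_deriv_bound R hR1
  have hg : ∀ (n : ℕ) (y : ℝ), y ∈ Set.Ioo (-R) R →
      HasDerivAt (fun z : ℝ => (catalan n : ℝ) * z ^ n / n !)
        ((catalan n : ℝ) * (n * y ^ (n - 1)) / n !) y := by
    intro n y _
    exact ((hasDerivAt_pow n y).const_mul ((catalan n : ℝ))).div_const (n ! : ℝ)
  have hg' : ∀ (n : ℕ) (y : ℝ), y ∈ Set.Ioo (-R) R →
      ‖(catalan n : ℝ) * (n * y ^ (n - 1)) / (n ! : ℝ)‖ ≤ (catalan n : ℝ) * n * R ^ (n - 1) / n ! := by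
    intro n y hy
    have hyR : |y| ≤ R := by
      rw [abs_le]; exact ⟨hy.1.le, hy.2.le⟩
    rw [Real.norm_eq_abs, abs_div, abs_mul, abs_mul, abs_pow, Nat.abs_cast, Nat.abs_cast,
      abs_of_nonneg (by positivity : (0:ℝ) ≤ (n ! : ℝ)), ← mul_assoc]
    apply div_le_div_of_nonneg_right ?_ (by positivity)
    gcongr
  have key := hasDerivAt_tsum_of_isPreconnected hu isOpen_Ioo
    (convex_Ioo (-R) R).isPreconnected hg hg'
    (show (0:ℝ) ∈ Set.Ioo (-R) R by constructor <;> [linarith; linarith])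
    (summable_egf 0) htmem
  have hsum2 : Summable (fun n : ℕ => (catalan n : ℝ) * (n * t ^ (n - 1)) / n !) :=
    Summable.of_norm_bounded hu (fun n => hg' n t htmem)
  have heq : ∑' n : ℕ, (catalan n : ℝ) * (n * t ^ (n - 1)) / n !
      = ∑' n : ℕ, (catalan (n+1) : ℝ) * t ^ n / n ! := by
    rw [hsum2.tsum_eq_zero_add]
    simp only [Nat.cast_zero, zero_mul, mul_zero, zero_div, zero_add]
    apply tsum_congr
    intro n
    have h1 : ((n + 1)! : ℝ) = (n + 1) * n ! := by exact_mod_cast Nat.factorial_succ n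
    have h2 : (0:ℝ) < (n ! : ℝ) := by positivity
    simp only [Nat.add_sub_cancel]
    rw [h1]
    push_cast
    field_simp
  rw [← heq]
  exact key

set_option maxHeartbeats 1000000 in
lemma abelian_ratio (a e : ℕ → ℝ) (ha : ∀ n, 0 < a n)
    (hsa : ∀ t : ℝ, Summable fun n => a n * t ^ n)
    (he0 : ∀ n, 0 ≤ e n) (heb : ∀ n, e n ≤ 3 * a n) {L : ℝ}
    (hL : Filter.Tendsto (fun n => e n / a n) Filter.atTop (nhds L)) :
    Filter.Tendsto (fun t : ℝ => (∑' n, e n * t ^ n) / (∑' n, a n * t ^ n))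
      Filter.atTop (nhds L) := by
  rw [Metric.tendsto_atTop]
  intro ε hε
  obtain ⟨M, hM⟩ := Metric.tendsto_atTop.mp hL (ε / 2) (by linarith)
  have hcoef : ∀ n, M ≤ n → |e n - L * a n| ≤ ε / 2 * a n := by
    intro n hn
    have h := hM n hn
    rw [Real.dist_eq] at h
    have han := ha n
    have heq : e n - L * a n = (e n / a n - L) * a n := by field_simp
    rw [heq, abs_mul, abs_of_pos han]
    exact mul_le_mul_of_nonneg_right h.le han.le
  set C := ∑ n ∈ Finset.range M, |e n - L * a n| with hCdef
  have hC0 : 0 ≤ C := Finset.sum_nonneg fun i _ => abs_nonneg _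
  set K := a (M + 1) with hKdef
  have hK : 0 < K := ha _
  refine ⟨max 1 (2 * C / (K * ε) + 1), fun t ht => ?_⟩
  have ht1 : (1:ℝ) ≤ t := le_trans (le_max_left _ _) ht
  have ht0 : (0:ℝ) < t := lt_of_lt_of_le one_pos ht1
  have htC : 2 * C / (K * ε) + 1 ≤ t := le_trans (le_max_right _ _) ht
  have hsa' := hsa t
  have hse' : Summable fun n => e n * t ^ n := by
    apply Summable.of_nonneg_of_le (fun n => mul_nonneg (he0 n) (by positivity))
      (fun n => ?_) (hsa'.mul_left 3)
    calc e n * t ^ n ≤ 3 * a n * t ^ n :=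
          mul_le_mul_of_nonneg_right (heb n) (by positivity)
      _ = 3 * (a n * t ^ n) := by ring
  set f := ∑' n, a n * t ^ n with hfdef
  set N := ∑' n, e n * t ^ n with hNdef
  have hfK : K * t ^ (M + 1) ≤ f :=
    hsa'.le_tsum (M + 1) fun j _ => mul_nonneg (ha j).le (by positivity)
  have hf0 : 0 < f := lt_of_lt_of_le (by positivity) hfK
  have hsL : Summable fun n => L * a n * t ^ n := by
    simpa [mul_assoc] using (hsa').mul_left L
  have hdiff : N - L * f = ∑' n, (e n - L * a n) * t ^ n := by
    have h2 : L * f = ∑' n, L * a n * t ^ n := by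
      rw [hfdef, ← tsum_mul_left]
      exact tsum_congr fun n => by ring
    rw [hNdef, h2, ← hse'.tsum_sub hsL]
    exact tsum_congr fun n => by ring
  have hsd : Summable fun n => |(e n - L * a n) * t ^ n| := by
    apply Summable.of_nonneg_of_le (fun n => abs_nonneg _)
      (fun n => ?_) (hsa'.mul_left (3 + |L|))
    rw [abs_mul, abs_of_pos (by positivity : (0:ℝ) < t ^ n)]
    have hb : |e n - L * a n| ≤ (3 + |L|) * a n := by
      calc |e n - L * a n| ≤ |e n| + |L * a n| := abs_sub _ _
        _ = e n + |L| * a n := by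
            rw [abs_of_nonneg (he0 n), abs_mul, abs_of_pos (ha n)]
        _ ≤ 3 * a n + |L| * a n := by linarith [heb n]
        _ = (3 + |L|) * a n := by ring
    calc |e n - L * a n| * t ^ n ≤ (3 + |L|) * a n * t ^ n :=
          mul_le_mul_of_nonneg_right hb (by positivity)
      _ = (3 + |L|) * (a n * t ^ n) := by ring
  have habs : |N - L * f| ≤ C * t ^ M + ε / 2 * f := by
    rw [hdiff]
    have h1 : |∑' n, (e n - L * a n) * t ^ n| ≤ ∑' n, |(e n - L * a n) * t ^ n| := by
      simpa only [Real.norm_eq_abs] using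
        norm_tsum_le_tsum_norm (f := fun n => (e n - L * a n) * t ^ n)
          (by simpa only [Real.norm_eq_abs] using hsd)
    refine h1.trans ?_
    rw [← hsd.sum_add_tsum_nat_add M]
    have hhead : ∑ i ∈ Finset.range M, |(e i - L * a i) * t ^ i| ≤ C * t ^ M := by
      rw [hCdef, Finset.sum_mul]
      apply Finset.sum_le_sum
      intro i hi
      rw [abs_mul, abs_of_pos (by positivity : (0:ℝ) < t ^ i)]
      exact mul_le_mul_of_nonneg_left
        (pow_le_pow_right₀ ht1 (Finset.mem_range.mp hi).le) (abs_nonneg _)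
    have htail : ∑' i, |(e (i + M) - L * a (i + M)) * t ^ (i + M)| ≤ ε / 2 * f := by
      have hs1 : Summable fun i : ℕ => a (i + M) * t ^ (i + M) :=
        (summable_nat_add_iff (f := fun n => a n * t ^ n) M).mpr hsa'
      have hsd2 : Summable fun i : ℕ => |(e (i + M) - L * a (i + M)) * t ^ (i + M)| :=
        (summable_nat_add_iff (f := fun n => |(e n - L * a n) * t ^ n|) M).mpr hsd
      have hs3 : Summable fun i : ℕ => ε / 2 * (a (i + M) * t ^ (i + M)) :=
        hs1.mul_left _
      have h2 : ∑' i, |(e (i + M) - L * a (i + M)) * t ^ (i + M)|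
          ≤ ∑' i, ε / 2 * (a (i + M) * t ^ (i + M)) := by
        apply Summable.tsum_le_tsum ?_ hsd2 hs3
        intro i
        rw [abs_mul, abs_of_pos (by positivity : (0:ℝ) < t ^ (i + M))]
        calc |e (i + M) - L * a (i + M)| * t ^ (i + M)
            ≤ (ε / 2 * a (i + M)) * t ^ (i + M) :=
              mul_le_mul_of_nonneg_right (hcoef (i + M) (Nat.le_add_left M i))
                (by positivity)
          _ = ε / 2 * (a (i + M) * t ^ (i + M)) := by ring
      refine h2.trans ?_
      rw [tsum_mul_left]
      apply mul_le_mul_of_nonneg_left ?_ (by linarith : (0:ℝ) ≤ ε / 2)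
      calc ∑' i, a (i + M) * t ^ (i + M)
          ≤ ∑ i ∈ Finset.range M, a i * t ^ i + ∑' i, a (i + M) * t ^ (i + M) := by
            have hnn : (0:ℝ) ≤ ∑ i ∈ Finset.range M, a i * t ^ i :=
              Finset.sum_nonneg fun i _ => mul_nonneg (ha i).le (by positivity)
            linarith
        _ = f := hsa'.sum_add_tsum_nat_add M
    exact add_le_add hhead htail
  rw [Real.dist_eq]
  have heq2 : N / f - L = (N - L * f) / f := by field_simp
  rw [heq2, abs_div, abs_of_pos hf0]
  have hKt : 2 * C < K * ε * t := by
    have h1 : 2 * C / (K * ε) < t := by linarith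
    have h2 : (0:ℝ) < K * ε := by positivity
    calc 2 * C = 2 * C / (K * ε) * (K * ε) := by field_simp
      _ < t * (K * ε) := mul_lt_mul_of_pos_right h1 h2
      _ = K * ε * t := by ring
  have hCt : C * t ^ M / f ≤ C / (K * t) := by
    have step1 : C * t ^ M / f ≤ C * t ^ M / (K * t ^ (M + 1)) := by
      gcongr
    refine step1.trans (le_of_eq ?_)
    rw [pow_succ]
    field_simp
  have hC2 : C / (K * t) < ε / 2 := by
    rw [div_lt_iff₀ (by positivity)]
    nlinarith
  calc |N - L * f| / f ≤ (C * t ^ M + ε / 2 * f) / f := by gcongr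
    _ = C * t ^ M / f + ε / 2 := by
        rw [add_div, mul_div_cancel_right₀ _ (ne_of_gt hf0)]
    _ ≤ C / (K * t) + ε / 2 := by linarith
    _ < ε := by linarith

noncomputable def catCoeffA (n : ℕ) : ℝ := (catalan n : ℝ) / n !

noncomputable def catCoeffE : ℕ → ℝ
  | 0 => 0
  | (n + 1) => 6 * (catalan n : ℝ) / ((n + 2) * n !)

lemma catalan_pos' (n : ℕ) : 0 < catalan n := by
  have h := succ_mul_catalan_eq_centralBinom n
  have hc := Nat.centralBinom_pos n
  by_contra hcon
  push_neg at hcon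
  interval_cases c : catalan n
  omega

lemma catCoeffA_pos (n : ℕ) : 0 < catCoeffA n :=
  div_pos (by exact_mod_cast catalan_pos' n) (by positivity)

lemma summable_A (t : ℝ) : Summable fun n => catCoeffA n * t ^ n :=
  (summable_egf t).congr fun n => by rw [catCoeffA]; ring

lemma catalan_rec_real (n : ℕ) :
    ((n : ℝ) + 2) * (catalan (n + 1) : ℝ) = (4 * n + 2) * catalan n := by
  exact_mod_cast catalan_rec n

lemma catCoeffE_succ_eq (n : ℕ) :
    catCoeffE (n + 1) = catCoeffA (n + 1) * ((6 * n + 6) / (4 * n + 2)) := by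
  have hrec := catalan_rec_real n
  have hfac : ((n + 1)! : ℝ) = (n + 1) * n ! := by exact_mod_cast Nat.factorial_succ n
  have hc1 : (0:ℝ) < (catalan (n + 1) : ℝ) := by exact_mod_cast catalan_pos' (n + 1)
  have hn2 : (0:ℝ) < (n : ℝ) + 2 := by positivity
  have hf : (0:ℝ) < (n ! : ℝ) := by positivity
  rw [catCoeffE, catCoeffA, hfac]
  field_simp
  ring_nf
  ring_nf at hrec
  nlinarith [hrec, hf, hc1]

lemma ratio_le_three (n : ℕ) : (6 * (n:ℝ) + 6) / (4 * n + 2) ≤ 3 := by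
  rw [div_le_iff₀ (by positivity)]
  have : (0:ℝ) ≤ (n:ℝ) := Nat.cast_nonneg n
  linarith

lemma catCoeffE_nonneg (n : ℕ) : 0 ≤ catCoeffE n := by
  cases n with
  | zero => rw [catCoeffE]
  | succ m =>
    rw [catCoeffE]
    apply div_nonneg
    · positivity
    · positivity

lemma catCoeffE_le (n : ℕ) : catCoeffE n ≤ 3 * catCoeffA n := by
  cases n with
  | zero =>
    rw [catCoeffE]
    have := catCoeffA_pos 0
    linarith
  | succ m =>
    rw [catCoeffE_succ_eq]
    calc catCoeffA (m + 1) * ((6 * m + 6) / (4 * m + 2))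
        ≤ catCoeffA (m + 1) * 3 :=
          mul_le_mul_of_nonneg_left (ratio_le_three m) (catCoeffA_pos (m + 1)).le
      _ = 3 * catCoeffA (m + 1) := by ring

lemma ratio_tendsto :
    Tendsto (fun n : ℕ => catCoeffE n / catCoeffA n) atTop (nhds (3 / 2)) := by
  rw [← tendsto_add_atTop_iff_nat 1]
  have h1 : Tendsto (fun n : ℕ => 4 * (n : ℝ) + 2) atTop atTop := by
    apply tendsto_atTop_add_const_right
    exact (tendsto_natCast_atTop_atTop (R := ℝ)).const_mul_atTop (by norm_num)
  have h2 : Tendsto (fun n : ℕ => 3 / (4 * (n : ℝ) + 2)) atTop (nhds 0) := by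
    have := h1.inv_tendsto_atTop
    have h3 := this.const_mul (3:ℝ)
    simpa [div_eq_mul_inv, Function.comp] using h3
  have h4 : Tendsto (fun n : ℕ => 3 / 2 + 3 / (4 * (n : ℝ) + 2)) atTop (nhds (3 / 2)) := by
    simpa using tendsto_const_nhds.add h2
  apply h4.congr
  intro n
  have hn : (0:ℝ) < 4 * (n:ℝ) + 2 := by positivity
  rw [catCoeffE_succ_eq, mul_div_cancel_left₀ _ (ne_of_gt (catCoeffA_pos (n + 1)))]
  have hn' := ne_of_gt hn
  field_simp
  ring

lemma summable_B (t : ℝ) : Summable (fun n => (catalan (n + 1) : ℝ) / n ! * t ^ n) := by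
  apply Summable.of_norm_bounded
    ((Real.summable_pow_div_factorial (4 * |t|)).mul_left 4)
  intro n
  rw [Real.norm_eq_abs, abs_mul, abs_div, abs_pow, Nat.abs_cast,
    abs_of_nonneg (by positivity : (0:ℝ) ≤ (n ! : ℝ)), mul_pow]
  have hcb : ((catalan (n + 1) : ℝ)) ≤ 4 * 4 ^ n := by
    calc ((catalan (n + 1) : ℝ)) ≤ 4 ^ (n + 1) := by exact_mod_cast catalan_le_four_pow (n + 1)
      _ = 4 * 4 ^ n := by ring
  calc (catalan (n + 1) : ℝ) / n ! * |t| ^ n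
      ≤ (4 * 4 ^ n) / n ! * |t| ^ n := by
        apply mul_le_mul_of_nonneg_right ?_ (by positivity)
        apply div_le_div_of_nonneg_right hcb (by positivity)
    _ = 4 * (4 ^ n * |t| ^ n / n !) := by ring

lemma summable_E (t : ℝ) (ht : 0 ≤ t) : Summable fun n => catCoeffE n * t ^ n := by
  apply Summable.of_nonneg_of_le
    (fun n => mul_nonneg (catCoeffE_nonneg n) (by positivity))
    (fun n => ?_) ((summable_A t).mul_left 3)
  calc catCoeffE n * t ^ n ≤ 3 * catCoeffA n * t ^ n :=
        mul_le_mul_of_nonneg_right (catCoeffE_le n) (by positivity)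
    _ = 3 * (catCoeffA n * t ^ n) := by ring

lemma coeff_identity (n : ℕ) :
    4 * catCoeffA n - (catalan (n + 1) : ℝ) / n ! = catCoeffE (n + 1) := by
  have hrec := catalan_rec_real n
  have hn2 : (0:ℝ) < (n : ℝ) + 2 := by positivity
  have hf : (0:ℝ) < (n ! : ℝ) := by positivity
  rw [catCoeffA, catCoeffE]
  field_simp
  nlinarith [hrec]

/-- For the exponential generating function f of the Catalan numbers,
t·(4 − f'(t)/f(t)) tends to 3/2 as t → +∞; i.e.
f'(t)/f(t) = 4 − 3/(2t) + O(1/t²) as t → +∞. -/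
theorem catalan_egf_logderiv_correction_tendsto :
    Filter.Tendsto (fun t : ℝ => t * (4 - deriv catalanEGF t / catalanEGF t))
      Filter.atTop (nhds (3 / 2)) := by
  have habel := abelian_ratio catCoeffA catCoeffE catCoeffA_pos summable_A
    catCoeffE_nonneg catCoeffE_le ratio_tendsto
  apply habel.congr'
  filter_upwards [eventually_ge_atTop (1:ℝ)] with t ht
  have ht0 : (0:ℝ) < t := lt_of_lt_of_le one_pos ht
  -- positivity of f
  have hF : catalanEGF t = ∑' n, catCoeffA n * t ^ n :=
    tsum_congr fun n => by rw [catCoeffA]; ring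
  have hFpos : 0 < catalanEGF t := by
    rw [hF]
    have h1 : catCoeffA 0 * t ^ 0 ≤ ∑' n, catCoeffA n * t ^ n :=
      (summable_A t).le_tsum 0 fun j _ => mul_nonneg (catCoeffA_pos j).le (by positivity)
    have h2 : (0:ℝ) < catCoeffA 0 * t ^ 0 := by
      have := catCoeffA_pos 0
      positivity
    linarith
  have hD : deriv catalanEGF t = ∑' n, (catalan (n + 1) : ℝ) / n ! * t ^ n := by
    rw [(hasDerivAt_catalanEGF t).deriv]
    exact tsum_congr fun n => by ring
  -- numerator identity
  have hsub : 4 * catalanEGF t - deriv catalanEGF t = ∑' n, catCoeffE (n + 1) * t ^ n := by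
    rw [hF, hD]
    have h4 : 4 * ∑' n, catCoeffA n * t ^ n = ∑' n, 4 * (catCoeffA n * t ^ n) :=
      (tsum_mul_left).symm
    rw [h4, ← (((summable_A t).mul_left 4)).tsum_sub (summable_B t)]
    exact tsum_congr fun n => by rw [← coeff_identity n]; ring
  have hnum : t * (4 * catalanEGF t - deriv catalanEGF t) = ∑' n, catCoeffE n * t ^ n := by
    rw [hsub, ← tsum_mul_left, (summable_E t ht0.le).tsum_eq_zero_add]
    have h0 : catCoeffE 0 * t ^ 0 = 0 := by rw [catCoeffE]; ring
    rw [h0, zero_add]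
    exact tsum_congr fun n => by ring
  have hfinal : t * (4 - deriv catalanEGF t / catalanEGF t)
      = (∑' n, catCoeffE n * t ^ n) / (∑' n, catCoeffA n * t ^ n) := by
    rw [← hnum, ← hF]
    field_simp
  exact hfinal.symm
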